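/- Let P be a training set in EuclideanSpace ℝ (Fin d) and let p ∈ P. Then every nearest enemy q of p is a border point of P: there exist a point q' ∈ P with l(q') ≠ l(q), a center z and a radius ρ > 0 with ‖z − q‖ = ρ, ‖z − q'‖ = ρ, and ‖z − x‖ ≥ ρ for all x ∈ P. -/

import Mathlib

/-- The nearest-enemy distance of `p`: the minimum of `‖p - q‖` over enemies `q` of `p`. -/
noncomputable def dne {d : ℕ} {Λ : Type*} (P : Finset (EuclideanSpace ℝ (Fin d)))
    (l : EuclideanSpace ℝ (Fin d) → Λ) (p : EuclideanSpace ℝ (Fin d)) : ℝ :=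
  sInf {r : ℝ | ∃ q ∈ P, l q ≠ l p ∧ r = ‖p - q‖}

/-- `q` is a nearest enemy of `p` in `P`: an enemy of `p` at minimum distance. -/
def IsNearestEnemy {d : ℕ} {Λ : Type*} (P : Finset (EuclideanSpace ℝ (Fin d)))
    (l : EuclideanSpace ℝ (Fin d) → Λ) (p q : EuclideanSpace ℝ (Fin d)) : Prop :=
  q ∈ P ∧ l q ≠ l p ∧ ∀ q' ∈ P, l q' ≠ l p → ‖p - q‖ ≤ ‖p - q'‖

/-- `p` is a border point of `P`: it lies, together with some enemy `q`, on the boundary of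
a ball containing no point of `P` in its interior. -/
def IsBorder {d : ℕ} {Λ : Type*} (P : Finset (EuclideanSpace ℝ (Fin d)))
    (l : EuclideanSpace ℝ (Fin d) → Λ) (p : EuclideanSpace ℝ (Fin d)) : Prop :=
  ∃ q ∈ P, l q ≠ l p ∧ ∃ (z : EuclideanSpace ℝ (Fin d)) (ρ : ℝ), 0 < ρ ∧
    ‖z - p‖ = ρ ∧ ‖z - q‖ = ρ ∧ ∀ x ∈ P, ρ ≤ ‖z - x‖

/-- Every nearest enemy of a point of `P` is a border point of `P`. -/
theorem nearestEnemy_isBorder {d : ℕ} {Λ : Type*}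
    (P : Finset (EuclideanSpace ℝ (Fin d))) (l : EuclideanSpace ℝ (Fin d) → Λ)
    (hP : ∀ p ∈ P, ∃ q ∈ P, l q ≠ l p)
    (p q : EuclideanSpace ℝ (Fin d)) (hp : p ∈ P)
    (hq : IsNearestEnemy P l p q) :
    IsBorder P l q := by
  classical
  obtain ⟨hqP, hlq, hmin⟩ := hq
  set v : EuclideanSpace ℝ (Fin d) := p - q with hv
  have hpq : p ≠ q := fun h => hlq (by rw [h])
  have hvne : v ≠ 0 := sub_ne_zero.mpr hpq
  have hvpos : (0:ℝ) < ‖v‖ := norm_pos_iff.mpr hvne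
  set T := P.filter (fun x => l x ≠ l q ∧ 0 < (inner ℝ v (x - q) : ℝ)) with hT
  have hipp : (inner ℝ v (p - q) : ℝ) = ‖v‖ ^ 2 := by
    rw [hv, real_inner_self_eq_norm_sq]
  have hpT : p ∈ T := by
    refine Finset.mem_filter.mpr ⟨hp, hlq.symm, ?_⟩
    rw [hipp]; positivity
  obtain ⟨x0, hx0T, hx0min⟩ := T.exists_min_image
    (fun x => ‖x - q‖ ^ 2 / (2 * (inner ℝ v (x - q) : ℝ))) ⟨p, hpT⟩
  obtain ⟨hx0P, hx0l, hx0ip⟩ := Finset.mem_filter.mp hx0T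
  set t : ℝ := ‖x0 - q‖ ^ 2 / (2 * (inner ℝ v (x0 - q) : ℝ)) with ht
  have hx0q : x0 ≠ q := fun h => hx0l (by rw [h] : l x0 = l q)
  have hx0qn : (0:ℝ) < ‖x0 - q‖ := norm_pos_iff.mpr (sub_ne_zero.mpr hx0q)
  have htpos : 0 < t := div_pos (by positivity) (by linarith)
  have hthalf : t ≤ 1 / 2 := by
    have h := hx0min p hpT
    simp only [hipp] at h
    rw [← hv] at h
    have he : ‖v‖ ^ 2 / (2 * ‖v‖ ^ 2) = 1 / 2 := by
      rw [div_eq_iff (by positivity)]; ring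
    linarith [he ▸ h]
  have haux : ∀ N a : ℝ, 0 < a → N = 2 * (N / (2 * a)) * a := by
    intro N a ha; field_simp
  have hkey : ‖x0 - q‖ ^ 2 = 2 * t * (inner ℝ v (x0 - q) : ℝ) := by
    rw [ht]; exact haux _ _ hx0ip
  have expand : ∀ x : EuclideanSpace ℝ (Fin d),
      ‖(q + t • v) - x‖ ^ 2
        = ‖x - q‖ ^ 2 - 2 * t * (inner ℝ v (x - q) : ℝ) + t ^ 2 * ‖v‖ ^ 2 := by
    intro x
    have h1 : (q + t • v) - x = t • v - (x - q) := by abel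
    rw [h1, norm_sub_sq_real, real_inner_smul_left, norm_smul, Real.norm_eq_abs,
      abs_of_pos htpos, mul_pow]
    ring
  refine ⟨x0, hx0P, hx0l, q + t • v, t * ‖v‖, by positivity, ?_, ?_, ?_⟩
  · have : (q + t • v) - q = t • v := by abel
    rw [this, norm_smul, Real.norm_eq_abs, abs_of_pos htpos]
  · have h2 : ‖(q + t • v) - x0‖ ^ 2 = (t * ‖v‖) ^ 2 := by
      rw [expand x0, hkey]; ring
    have h3 : (0:ℝ) ≤ ‖(q + t • v) - x0‖ := norm_nonneg _
    nlinarith [norm_nonneg ((q + t • v) - x0), mul_pos htpos hvpos]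
  · intro x hx
    by_contra hcon
    push_neg at hcon
    -- x is strictly inside the ball; first show it is close to p
    have hpz : ‖p - (q + t • v)‖ = (1 - t) * ‖v‖ := by
      have h1 : p - (q + t • v) = (1 - t) • v := by
        rw [sub_smul, one_smul, hv]; abel
      rw [h1, norm_smul, Real.norm_eq_abs, abs_of_pos (by linarith : (0:ℝ) < 1 - t)]
    have hpx : ‖p - x‖ < ‖v‖ := by
      calc ‖p - x‖ = dist p x := (dist_eq_norm p x).symm
        _ ≤ dist p (q + t • v) + dist (q + t • v) x := dist_triangle ..
        _ = ‖p - (q + t • v)‖ + ‖(q + t • v) - x‖ := by rw [dist_eq_norm, dist_eq_norm]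
        _ < (1 - t) * ‖v‖ + t * ‖v‖ := by rw [hpz]; linarith
        _ = ‖v‖ := by ring
    have hlx : l x = l p := by
      by_contra hlx
      have := hmin x hx hlx
      linarith
    have hlxq : l x ≠ l q := by rw [hlx]; exact hlq.symm
    have hxq : x ≠ q := fun h => hlxq (by rw [h])
    have hxqn : (0:ℝ) < ‖x - q‖ := norm_pos_iff.mpr (sub_ne_zero.mpr hxq)
    have hsq : ‖(q + t • v) - x‖ ^ 2 < (t * ‖v‖) ^ 2 := by
      have := norm_nonneg ((q + t • v) - x)
      nlinarith
    rw [expand x] at hsq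
    have hlt : ‖x - q‖ ^ 2 < 2 * t * (inner ℝ v (x - q) : ℝ) := by nlinarith
    have hippos : (0:ℝ) < (inner ℝ v (x - q) : ℝ) := by nlinarith
    have hxT : x ∈ T := Finset.mem_filter.mpr ⟨hx, hlxq, hippos⟩
    have := hx0min x hxT
    have hflt : ‖x - q‖ ^ 2 / (2 * (inner ℝ v (x - q) : ℝ)) < t :=
      (div_lt_iff₀ (by linarith)).mpr (by linarith)
    linarith
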